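/- arXiv:1806.02553 — 2 statements merged into one kernel-verified Lean document; each statement's English description precedes it below -/
import Mathlib

section
/- Let X be a Banach lattice and let (x_n)_{n∈ℕ} be a sequence in X that is equivalent to the canonical basis of c_0, i.e., there are constants c, C > 0 such that c · max_{1≤i≤m} |λ_i| ≤ ‖∑_{i=1}^m λ_i x_i‖ ≤ C · max_{1≤i≤m} |λ_i| for all m and all real scalars λ_1, …, λ_m. Then the sequence (|x_n|) satisfies an upper ℓ_2-estimate: there is a constant K > 0 such that ‖∑_{i=1}^m λ_i |x_i|‖ ≤ K (∑_{i=1}^m λ_i^2)^{1/2} for all m and all real scalars λ_1, …, λ_m. -/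
open Finset


section SmulOrder
variable {X : Type} [NormedAddCommGroup X] [Lattice X] [IsOrderedAddMonoid X] [HasSolidNorm X] [NormedSpace ℝ X]

lemma mySmul_nonneg {r : ℝ} (hr : 0 ≤ r) {z : X} (hz : 0 ≤ z) : 0 ≤ r • z := by
  have key : ∀ (k : ℕ) (w : X), 0 ≤ w → 0 ≤ ((2:ℝ) ^ k)⁻¹ • w := by
    intro k
    induction k with
    | zero => intro w hw; simpa using hw
    | succ k ih =>
      intro w hw
      apply nsmul_two_semiclosed
      have h2 : (2 : ℕ) • (((2:ℝ) ^ (k+1))⁻¹ • w) = ((2:ℝ) ^ k)⁻¹ • w := by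
        rw [← Nat.cast_smul_eq_nsmul ℝ, smul_smul]
        norm_num [pow_succ]
        congr 1
        ring
      rw [h2]; exact ih w hw
  set q : ℕ → ℝ := fun k => (⌊r * 2 ^ k⌋₊ : ℝ) / 2 ^ k with hqdef
  have hq0 : ∀ k, 0 ≤ q k • z := by
    intro k
    have h1 : q k • z = ⌊r * 2 ^ k⌋₊ • (((2:ℝ) ^ k)⁻¹ • z) := by
      rw [← Nat.cast_smul_eq_nsmul ℝ, smul_smul, hqdef]
      ring_nf
    rw [h1]
    exact nsmul_nonneg (key k z hz) _
  have h2k : ∀ k : ℕ, (0:ℝ) < 2 ^ k := fun k => by positivity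
  have hub : ∀ k, q k ≤ r := by
    intro k
    rw [hqdef, div_le_iff₀ (h2k k)]
    exact Nat.floor_le (by positivity)
  have hlb : ∀ k, r - ((1:ℝ)/2) ^ k ≤ q k := by
    intro k
    show r - ((1:ℝ)/2) ^ k ≤ (⌊r * 2 ^ k⌋₊ : ℝ) / 2 ^ k
    have h1 := (Nat.lt_floor_add_one (r * 2 ^ k)).le
    have hpow : ((1:ℝ)/2) ^ k * 2 ^ k = 1 := by
      rw [← mul_pow]; norm_num
    have h2 : (r - ((1:ℝ)/2) ^ k) * 2 ^ k ≤ (⌊r * 2 ^ k⌋₊ : ℝ) := by nlinarith [h2k k]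
    calc r - ((1:ℝ)/2) ^ k = ((r - ((1:ℝ)/2) ^ k) * 2 ^ k) / 2 ^ k := by
          field_simp
      _ ≤ (⌊r * 2 ^ k⌋₊ : ℝ) / 2 ^ k := by gcongr
  have hqr : Filter.Tendsto q Filter.atTop (nhds r) := by
    apply tendsto_of_tendsto_of_tendsto_of_le_of_le _ _ hlb hub
    · have h0 : Filter.Tendsto (fun k : ℕ => ((1:ℝ)/2) ^ k) Filter.atTop (nhds 0) :=
        tendsto_pow_atTop_nhds_zero_of_lt_one (by norm_num) (by norm_num)
      simpa using (tendsto_const_nhds (x := r)).sub h0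
    · exact tendsto_const_nhds
  have htend : Filter.Tendsto (fun k => q k • z) Filter.atTop (nhds (r • z)) :=
    hqr.smul_const z
  exact isClosed_nonneg.mem_of_tendsto htend (Filter.Eventually.of_forall hq0)

lemma mySmul_mono_right {r : ℝ} (hr : 0 ≤ r) {z w : X} (h : z ≤ w) : r • z ≤ r • w := by
  have := mySmul_nonneg hr (sub_nonneg.2 h)
  rwa [smul_sub, sub_nonneg] at this

lemma mySmul_mono_left {r s : ℝ} (h : r ≤ s) {z : X} (hz : 0 ≤ z) : r • z ≤ s • z := by
  have := mySmul_nonneg (sub_nonneg.2 h) hz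
  rwa [sub_smul, sub_nonneg] at this

lemma mySmul_sup {r : ℝ} (hr : 0 ≤ r) (a b : X) : r • (a ⊔ b) = (r • a) ⊔ (r • b) := by
  rcases eq_or_lt_of_le hr with h0 | hpos
  · simp [← h0]
  refine le_antisymm ?_ (sup_le (mySmul_mono_right hr le_sup_left)
      (mySmul_mono_right hr le_sup_right))
  have h1 : a ⊔ b ≤ r⁻¹ • ((r • a) ⊔ (r • b)) := by
    apply sup_le
    · have := mySmul_mono_right (le_of_lt (inv_pos.2 hpos)) (le_sup_left (a := r • a) (b := r • b))
      rwa [smul_smul, inv_mul_cancel₀ (ne_of_gt hpos), one_smul] at this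
    · have := mySmul_mono_right (le_of_lt (inv_pos.2 hpos)) (le_sup_right (a := r • a) (b := r • b))
      rwa [smul_smul, inv_mul_cancel₀ (ne_of_gt hpos), one_smul] at this
  have := mySmul_mono_right hr h1
  rwa [smul_smul, mul_inv_cancel₀ (ne_of_gt hpos), one_smul] at this

lemma mySmul_abs {r : ℝ} (hr : 0 ≤ r) (z : X) : |r • z| = r • |z| := by
  rw [abs, abs, mySmul_sup hr, smul_neg]

lemma myAbs_smul_le (r : ℝ) (z : X) : |r • z| ≤ |r| • |z| := by
  rcases le_or_gt 0 r with h | h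
  · rw [mySmul_abs h, abs_of_nonneg h]
  · have h1 : r • z = -((-r) • z) := by rw [neg_smul, neg_neg]
    rw [abs_of_neg h, h1, abs_neg, mySmul_abs (neg_nonneg.2 h.le)]

lemma mySmul_le_abs {r : ℝ} (hr : |r| ≤ 1) (z : X) : r • z ≤ |z| := by
  calc r • z ≤ |r • z| := le_abs_self _
  _ ≤ |r| • |z| := myAbs_smul_le r z
  _ ≤ (1:ℝ) • |z| := mySmul_mono_left hr (abs_nonneg z)
  _ = |z| := one_smul _ _

end SmulOrder


section LatticeLemmas
variable {X : Type} [NormedAddCommGroup X] [Lattice X] [IsOrderedAddMonoid X] [HasSolidNorm X] [NormedSpace ℝ X]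

lemma myAbs_sum_le {ι : Type*} [DecidableEq ι] (s : Finset ι) (f : ι → X) :
    |∑ i ∈ s, f i| ≤ ∑ i ∈ s, |f i| := by
  induction s using Finset.induction_on with
  | empty => simp
  | insert _ _ hj ih =>
    rw [Finset.sum_insert ‹_›, Finset.sum_insert ‹_›]
    exact le_trans (abs_add_le _ _) (add_le_add_right ih _)

/-- If every ±1 signed combination is below `v`, then the sum of absolute values is below `v`. -/
lemma sum_abs_le_of_signs {ι : Type*} [DecidableEq ι] (s : Finset ι) (y : ι → X) (v : X)
    (h : ∀ δ : ι → ℝ, (∀ i, δ i = 1 ∨ δ i = -1) → ∑ i ∈ s, δ i • y i ≤ v) :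
    ∑ i ∈ s, |y i| ≤ v := by
  induction s using Finset.induction_on generalizing v with
  | empty =>
    simpa using h (fun _ => 1) (fun _ => Or.inl rfl)
  | @insert j s hj ih =>
    rw [Finset.sum_insert hj]
    have key : ∀ e : ℝ, e = 1 ∨ e = -1 → ∑ i ∈ s, |y i| ≤ v - e • y j := by
      intro e he
      apply ih
      intro δ hδ
      have hup : ∀ i, Function.update δ j e i = 1 ∨ Function.update δ j e i = -1 := by
        intro i
        rcases eq_or_ne i j with rfl | hij
        · simpa using he
        · rw [Function.update_of_ne hij]; exact hδ i
      have h0 := h (Function.update δ j e) hup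
      rw [Finset.sum_insert hj, Function.update_self] at h0
      have heq : ∑ i ∈ s, Function.update δ j e i • y i = ∑ i ∈ s, δ i • y i := by
        refine Finset.sum_congr rfl fun i hi => ?_
        have hij : i ≠ j := fun hh => hj (hh ▸ hi)
        rw [Function.update_of_ne hij]
      rw [heq] at h0
      rw [le_sub_iff_add_le, add_comm]
      exact h0
    have h1 := key 1 (Or.inl rfl)
    have h2 := key (-1) (Or.inr rfl)
    rw [one_smul] at h1
    rw [neg_one_smul] at h2
    rw [add_comm, ← le_sub_iff_add_le]
    have habs : |y j| = y j ⊔ -y j := rfl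
    rw [habs, sub_sup]
    exact le_inf h1 h2

end LatticeLemmas


/-- Sign attached to a boolean. -/
def sg (b : Bool) : ℝ := if b then 1 else -1

lemma sg_abs (b : Bool) : |sg b| = 1 := by cases b <;> simp [sg]

/-- The Rademacher sum. -/
def Zc (n : ℕ) (c : Fin n → ℝ) (σ : Fin n → Bool) : ℝ := ∑ i, sg (σ i) * c i

lemma Zc_cons (n : ℕ) (c : Fin (n+1) → ℝ) (b : Bool) (τ : Fin n → Bool) :
    Zc (n+1) c (Fin.cons b τ) = sg b * c 0 + Zc n (fun i => c i.succ) τ := by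
  unfold Zc
  rw [Fin.sum_univ_succ]
  simp

lemma sum_split (n : ℕ) (F : (Fin (n+1) → Bool) → ℝ) :
    ∑ σ : Fin (n+1) → Bool, F σ
      = ∑ τ : Fin n → Bool, (F (Fin.cons true τ) + F (Fin.cons false τ)) := by
  rw [← Fintype.sum_equiv (Fin.consEquiv (fun _ => Bool)) (fun p => F (Fin.cons p.1 p.2)) F
    (fun p => rfl)]
  rw [Fintype.sum_prod_type]
  rw [Fintype.sum_bool]
  rw [← Finset.sum_add_distrib]

lemma moment2 (n : ℕ) (c : Fin n → ℝ) :
    ∑ σ : Fin n → Bool, (Zc n c σ) ^ 2 = 2 ^ n * ∑ i, c i ^ 2 := by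
  induction n with
  | zero => simp [Zc]
  | succ n ih =>
    rw [sum_split n (fun σ => (Zc (n+1) c σ) ^ 2)]
    have h1 : ∀ τ : Fin n → Bool,
        (Zc (n+1) c (Fin.cons true τ)) ^ 2 + (Zc (n+1) c (Fin.cons false τ)) ^ 2
          = 2 * c 0 ^ 2 + 2 * (Zc n (fun i => c i.succ) τ) ^ 2 := by
      intro τ
      rw [Zc_cons, Zc_cons]
      norm_num [sg]
      ring
    rw [Finset.sum_congr rfl (fun τ _ => h1 τ), Finset.sum_add_distrib,
      Finset.sum_const, ← Finset.mul_sum, ih]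
    simp only [Finset.card_univ, Fintype.card_fun, Fintype.card_bool, Fintype.card_fin,
      nsmul_eq_mul]
    rw [Fin.sum_univ_succ]
    push_cast
    ring

lemma moment4 (n : ℕ) (c : Fin n → ℝ) :
    ∑ σ : Fin n → Bool, (Zc n c σ) ^ 4 ≤ 3 * 2 ^ n * (∑ i, c i ^ 2) ^ 2 := by
  induction n with
  | zero => simp [Zc]
  | succ n ih =>
    rw [sum_split n (fun σ => (Zc (n+1) c σ) ^ 4)]
    have h1 : ∀ τ : Fin n → Bool,
        (Zc (n+1) c (Fin.cons true τ)) ^ 4 + (Zc (n+1) c (Fin.cons false τ)) ^ 4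
          = 2 * (Zc n (fun i => c i.succ) τ) ^ 4
            + 12 * c 0 ^ 2 * (Zc n (fun i => c i.succ) τ) ^ 2 + 2 * c 0 ^ 4 := by
      intro τ
      rw [Zc_cons, Zc_cons]
      norm_num [sg]
      ring
    rw [Finset.sum_congr rfl (fun τ _ => h1 τ)]
    have e1 : ∑ τ : Fin n → Bool, (2 * Zc n (fun i => c i.succ) τ ^ 4
          + 12 * c 0 ^ 2 * Zc n (fun i => c i.succ) τ ^ 2 + 2 * c 0 ^ 4)
        = 2 * (∑ τ : Fin n → Bool, Zc n (fun i => c i.succ) τ ^ 4)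
          + 12 * c 0 ^ 2 * (∑ τ : Fin n → Bool, Zc n (fun i => c i.succ) τ ^ 2)
          + 2 ^ n * (2 * c 0 ^ 4) := by
      rw [Finset.sum_add_distrib, Finset.sum_add_distrib, ← Finset.mul_sum, ← Finset.mul_sum,
        Finset.sum_const]
      simp only [Finset.card_univ, Fintype.card_fun, Fintype.card_bool, Fintype.card_fin,
        nsmul_eq_mul]
      push_cast
      ring
    rw [e1, moment2, Fin.sum_univ_succ]
    have hpow : (2:ℝ) ^ (n+1) = 2 * 2 ^ n := by ring
    have hB : (0:ℝ) ≤ ∑ i : Fin n, c i.succ ^ 2 := by positivity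
    have hc0 : (0:ℝ) ≤ c 0 ^ 2 := sq_nonneg _
    have h2 : (0:ℝ) < 2 ^ n := by positivity
    rw [hpow]
    nlinarith [ih (fun i => c i.succ), mul_nonneg (mul_nonneg h2.le hc0) hc0,
      mul_nonneg (mul_nonneg h2.le hc0) hB]

lemma khintchine (n : ℕ) (c : Fin n → ℝ) :
    2 ^ n * Real.sqrt (∑ i, c i ^ 2) ≤ 5 * ∑ σ : Fin n → Bool, |Zc n c σ| := by
  set B := ∑ i, c i ^ 2 with hBdef
  have hB : 0 ≤ B := by positivity
  have hS1 : 0 ≤ ∑ σ : Fin n → Bool, |Zc n c σ| :=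
    Finset.sum_nonneg fun σ _ => abs_nonneg _
  rcases eq_or_lt_of_le hB with h0 | hBpos
  · rw [← h0, Real.sqrt_zero, mul_zero]
    positivity
  set t := Real.sqrt (6 * B) with htdef
  have ht : 0 < t := Real.sqrt_pos.2 (by linarith)
  have ht2 : t ^ 2 = 6 * B := Real.sq_sqrt (by linarith)
  have hpt : ∀ σ : Fin n → Bool, (Zc n c σ) ^ 2 ≤ t * |Zc n c σ| + (Zc n c σ) ^ 4 / t ^ 2 := by
    intro σ
    set z := Zc n c σ
    rcases le_or_gt |z| t with h | h
    · have h1 : z ^ 2 ≤ t * |z| := by nlinarith [sq_abs z, abs_nonneg z]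
      have h2 : 0 ≤ z ^ 4 / t ^ 2 := by positivity
      linarith
    · have h1 : z ^ 2 * t ^ 2 ≤ z ^ 4 := by
        nlinarith [sq_abs z, sq_nonneg z, mul_self_lt_mul_self ht.le h]
      have h2 : z ^ 2 ≤ z ^ 4 / t ^ 2 := by
        rw [le_div_iff₀ (by positivity)]
        exact h1
      have h3 : 0 ≤ t * |z| := by positivity
      linarith
  have hsum : ∑ σ : Fin n → Bool, (Zc n c σ) ^ 2
      ≤ t * (∑ σ : Fin n → Bool, |Zc n c σ|) + (∑ σ : Fin n → Bool, (Zc n c σ) ^ 4) / t ^ 2 := by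
    rw [Finset.mul_sum, Finset.sum_div, ← Finset.sum_add_distrib]
    exact Finset.sum_le_sum fun σ _ => hpt σ
  have hm2 := moment2 n c
  have hm4 := moment4 n c
  have h4 : (∑ σ : Fin n → Bool, (Zc n c σ) ^ 4) / t ^ 2 ≤ 2 ^ n * B / 2 := by
    rw [ht2, div_le_iff₀ (by linarith)]
    calc ∑ σ : Fin n → Bool, (Zc n c σ) ^ 4 ≤ 3 * 2 ^ n * B ^ 2 := hm4
    _ = 2 ^ n * B / 2 * (6 * B) := by ring
  have hmain : 2 ^ n * B / 2 ≤ t * ∑ σ : Fin n → Bool, |Zc n c σ| := by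
    rw [hm2] at hsum
    linarith
  -- now convert
  set sB := Real.sqrt B with hsBdef
  have hsB : 0 < sB := Real.sqrt_pos.2 hBpos
  have hsB2 : sB ^ 2 = B := Real.sq_sqrt hB
  have htB : t = Real.sqrt 6 * sB := by
    rw [htdef, hsBdef, Real.sqrt_mul (by norm_num)]
  have h6 : Real.sqrt 6 ≤ 5 / 2 := by
    nlinarith [Real.sq_sqrt (by norm_num : (0:ℝ) ≤ 6), Real.sqrt_nonneg 6]
  have h6n : 0 ≤ Real.sqrt 6 := Real.sqrt_nonneg 6
  rw [htB] at hmain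
  have h2n : (0:ℝ) < 2 ^ n := by positivity
  have hmain' : 2 ^ n * sB ^ 2 / 2 ≤ Real.sqrt 6 * sB * ∑ σ : Fin n → Bool, |Zc n c σ| := by
    rw [hsB2]; exact hmain
  have h5 : Real.sqrt 6 * sB * (∑ σ : Fin n → Bool, |Zc n c σ|)
      ≤ 5 / 2 * (sB * ∑ σ : Fin n → Bool, |Zc n c σ|) := by
    nlinarith [mul_nonneg hsB.le hS1]
  have hfin : (2 ^ n * sB) * sB ≤ (5 * ∑ σ : Fin n → Bool, |Zc n c σ|) * sB := by
    nlinarith [hmain', h5]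
  exact le_of_mul_le_mul_right hfin hsB



lemma exists_theta (n : ℕ) (a : Fin n → ℝ)
    (ha : Real.sqrt (∑ i, a i ^ 2) ≤ 1 / 5) :
    ∃ θ : (Fin n → Bool) → ℝ, (∀ σ, |θ σ| ≤ 1) ∧
      ∀ i, ∑ σ : Fin n → Bool, θ σ * sg (σ i) = 2 ^ n * a i := by
  classical
  set T : ((Fin n → Bool) → ℝ) →ₗ[ℝ] (Fin n → ℝ) :=
    { toFun := fun θ i => ∑ σ : Fin n → Bool, θ σ * sg (σ i)
      map_add' := by
        intro θ η; funext i; simp [add_mul, Finset.sum_add_distrib]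
      map_smul' := by
        intro r θ; funext i; simp [Finset.mul_sum, mul_assoc] } with hTdef
  have hTapp : ∀ θ i, T θ i = ∑ σ : Fin n → Bool, θ σ * sg (σ i) := fun θ i => rfl
  set D : Set ((Fin n → Bool) → ℝ) := Set.univ.pi (fun _ => Set.Icc (-1:ℝ) 1) with hDdef
  have hDconv : Convex ℝ D := convex_pi fun _ _ => convex_Icc _ _
  have hDcomp : IsCompact D := isCompact_univ_pi fun _ => isCompact_Icc
  have hTcont : Continuous T := T.continuous_of_finiteDimensional
  have hKconv : Convex ℝ (T '' D) := hDconv.linear_image T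
  have hKclosed : IsClosed (T '' D) := (hDcomp.image hTcont).isClosed
  by_contra hcon
  push_neg at hcon
  have hmem : (fun i => (2:ℝ) ^ n * a i) ∉ T '' D := by
    rintro ⟨θ, hθD, hθT⟩
    have hθb : ∀ σ, |θ σ| ≤ 1 := by
      intro σ
      have := hθD σ (Set.mem_univ σ)
      rw [abs_le]
      exact ⟨this.1, this.2⟩
    obtain ⟨i, hi⟩ := hcon θ hθb
    exact hi ((congrFun hθT i).trans rfl)
  obtain ⟨f, u, hfK, hfa⟩ := geometric_hahn_banach_closed_point hKconv hKclosed hmem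
  set cc : Fin n → ℝ := fun i => f (fun j => if i = j then (1:ℝ) else 0) with hccdef
  have hf : ∀ y : Fin n → ℝ, f y = ∑ i, y i * cc i := by
    intro y
    conv_lhs => rw [pi_eq_sum_univ y]
    rw [map_sum]
    refine Finset.sum_congr rfl fun i _ => ?_
    rw [map_smul]
    simp [hccdef]
  set θs : (Fin n → Bool) → ℝ := fun σ => if 0 ≤ Zc n cc σ then 1 else -1 with hθsdef
  have hθsD : θs ∈ D := by
    intro σ _
    constructor <;> · simp only [hθsdef]; split <;> norm_num
  have hTθs : f (T θs) = ∑ σ : Fin n → Bool, |Zc n cc σ| := by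
    rw [hf]
    calc ∑ i, T θs i * cc i = ∑ i, ∑ σ : Fin n → Bool, θs σ * (sg (σ i) * cc i) := by
          refine Finset.sum_congr rfl fun i _ => ?_
          rw [hTapp, Finset.sum_mul]
          exact Finset.sum_congr rfl fun σ _ => by ring
      _ = ∑ σ : Fin n → Bool, θs σ * Zc n cc σ := by
          rw [Finset.sum_comm]
          exact Finset.sum_congr rfl fun σ _ => by rw [Zc, Finset.mul_sum]
      _ = ∑ σ : Fin n → Bool, |Zc n cc σ| := by
          refine Finset.sum_congr rfl fun σ _ => ?_
          simp only [hθsdef]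
          split
          · rw [one_mul, abs_of_nonneg ‹_›]
          · rw [neg_one_mul, abs_of_neg (by linarith [not_le.1 ‹_›])]
  have hlt1 : f (T θs) < u := hfK _ ⟨θs, hθsD, rfl⟩
  have hfa' : f (fun i => (2:ℝ) ^ n * a i) = 2 ^ n * ∑ i, a i * cc i := by
    rw [hf, Finset.mul_sum]
    exact Finset.sum_congr rfl fun i _ => by ring
  -- Cauchy-Schwarz
  have hcs : ∑ i, a i * cc i ≤ Real.sqrt (∑ i, a i ^ 2) * Real.sqrt (∑ i, cc i ^ 2) := by
    have h1 := Finset.sum_mul_sq_le_sq_mul_sq Finset.univ a cc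
    have h2 : ∑ i, a i * cc i ≤ |∑ i, a i * cc i| := le_abs_self _
    have h3 : |∑ i, a i * cc i| = Real.sqrt ((∑ i, a i * cc i) ^ 2) :=
      (Real.sqrt_sq_eq_abs _).symm
    rw [h3] at h2
    refine h2.trans ?_
    rw [← Real.sqrt_mul (by positivity)]
    exact Real.sqrt_le_sqrt h1
  have hkh := khintchine n cc
  have hsqcc : 0 ≤ Real.sqrt (∑ i, cc i ^ 2) := Real.sqrt_nonneg _
  have h2n : (0:ℝ) ≤ 2 ^ n := by positivity
  have hchain : f (fun i => (2:ℝ) ^ n * a i) ≤ ∑ σ : Fin n → Bool, |Zc n cc σ| := by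
    rw [hfa']
    calc 2 ^ n * ∑ i, a i * cc i
        ≤ 2 ^ n * (Real.sqrt (∑ i, a i ^ 2) * Real.sqrt (∑ i, cc i ^ 2)) := by
          exact mul_le_mul_of_nonneg_left hcs h2n
      _ ≤ 2 ^ n * ((1/5) * Real.sqrt (∑ i, cc i ^ 2)) := by
          refine mul_le_mul_of_nonneg_left ?_ h2n
          exact mul_le_mul_of_nonneg_right ha hsqcc
      _ = (1/5) * (2 ^ n * Real.sqrt (∑ i, cc i ^ 2)) := by ring
      _ ≤ (1/5) * (5 * ∑ σ : Fin n → Bool, |Zc n cc σ|) := by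
          refine mul_le_mul_of_nonneg_left hkh (by norm_num)
      _ = ∑ σ : Fin n → Bool, |Zc n cc σ| := by ring
  linarith [hTθs ▸ hlt1, hfa, hchain]


section Main
variable {X : Type} [NormedAddCommGroup X] [Lattice X] [IsOrderedAddMonoid X] [HasSolidNorm X] [NormedSpace ℝ X]

/-- **Upper ℓ₂-estimate for moduli of c₀-sequences.** If `(x_n)` is a sequence in a Banach
lattice `X` equivalent to the canonical basis of `c₀`, then the sequence of absolute
values `(|x_n|)` satisfies an upper `ℓ₂`-estimate. -/
theorem abs_of_c0_sequence_upper_estimate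
    (X : Type) [NormedAddCommGroup X] [Lattice X] [IsOrderedAddMonoid X] [HasSolidNorm X] [NormedSpace ℝ X] [CompleteSpace X]
    (x : ℕ → X) (c C : ℝ) (hc : 0 < c) (hC : 0 < C)
    (hlow : ∀ (m : ℕ) (lam : Fin m → ℝ),
      c * (⨆ i : Fin m, |lam i|) ≤ ‖∑ i, lam i • x (i : ℕ)‖)
    (hupp : ∀ (m : ℕ) (lam : Fin m → ℝ),
      ‖∑ i, lam i • x (i : ℕ)‖ ≤ C * (⨆ i : Fin m, |lam i|)) :
    ∃ K : ℝ, 0 < K ∧ ∀ (m : ℕ) (lam : Fin m → ℝ),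
      ‖∑ i, lam i • |x (i : ℕ)|‖ ≤ K * (∑ i, (lam i) ^ 2) ^ ((1 : ℝ) / 2) := by
  classical
  refine ⟨5 * C, by positivity, ?_⟩
  intro m lam
  have hrw : (∑ i, (lam i) ^ 2) ^ ((1:ℝ)/2) = Real.sqrt (∑ i, lam i ^ 2) :=
    (Real.sqrt_eq_rpow _).symm
  rw [hrw]
  rcases Nat.eq_zero_or_pos m with hm | hm
  · subst hm
    simp
  set L := Real.sqrt (∑ i, lam i ^ 2) with hLdef
  have hL0 : 0 ≤ L := Real.sqrt_nonneg _
  have hL2 : L ^ 2 = ∑ i, lam i ^ 2 := Real.sq_sqrt (by positivity)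
  rcases eq_or_lt_of_le hL0 with hL | hL
  · -- L = 0 : all coefficients vanish
    have hsum : ∑ i, lam i ^ 2 = 0 := by rw [← hL2, ← hL]; ring
    have hzero : ∀ i ∈ Finset.univ, lam i • |x (i:ℕ)| = (0:X) := by
      intro i _
      have h1 : lam i ^ 2 = 0 :=
        (Finset.sum_eq_zero_iff_of_nonneg (fun i _ => sq_nonneg (lam i))).1 hsum i (mem_univ i)
      have h2 : lam i = 0 := by nlinarith [h1]
      rw [h2, zero_smul]
    rw [Finset.sum_eq_zero hzero, norm_zero, ← hL]
    norm_num
  -- main case : L > 0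
  set Y : (Fin m → Bool) → X := fun σ => ∑ i, sg (σ i) • x (i:ℕ) with hYdef
  have hYnorm : ∀ σ, ‖Y σ‖ ≤ C := by
    intro σ
    have h1 := hupp m (fun i => sg (σ i))
    have hsup : (⨆ i : Fin m, |sg (σ i)|) = 1 := by
      haveI : Nonempty (Fin m) := Fin.pos_iff_nonempty.1 hm
      simp only [sg_abs]
      exact ciSup_const
    rw [hsup, mul_one] at h1
    exact h1
  set v : X := (5 * L) • (((2:ℝ) ^ m)⁻¹ • ∑ σ : Fin m → Bool, |Y σ|) with hvdef
  have hsumY0 : (0:X) ≤ ∑ σ : Fin m → Bool, |Y σ| :=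
    Finset.sum_nonneg fun σ _ => abs_nonneg _
  have hv0 : (0:X) ≤ v := by
    apply mySmul_nonneg (by positivity)
    exact mySmul_nonneg (by positivity) hsumY0
  -- the key order estimate
  have hkey : ∑ i, |(|lam i|) • x (i:ℕ)| ≤ v := by
    apply sum_abs_le_of_signs
    intro δ hδ
    set aa : Fin m → ℝ := fun i => δ i * |lam i| / (5 * L) with haadef
    have haa : Real.sqrt (∑ i, aa i ^ 2) ≤ 1/5 := by
      have h1 : ∀ i, aa i ^ 2 = lam i ^ 2 / (25 * L ^ 2) := by
        intro i
        have hd2 : δ i ^ 2 = 1 := by rcases hδ i with h | h <;> rw [h] <;> norm_num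
        rw [haadef]
        simp only
        rw [div_pow, mul_pow, hd2, one_mul, sq_abs, mul_pow]
        norm_num
      rw [Finset.sum_congr rfl fun i _ => h1 i, ← Finset.sum_div, ← hL2]
      have hx : L ^ 2 / (25 * L ^ 2) = ((1:ℝ)/5) ^ 2 := by
        rw [div_eq_iff (by positivity : (25:ℝ) * L ^ 2 ≠ 0)]
        ring
      rw [hx, Real.sqrt_sq (by norm_num)]
    obtain ⟨θ, hθ1, hθ2⟩ := exists_theta m aa haa
    have hcomp : ∑ i, δ i • ((|lam i|) • x (i:ℕ))
        = (5 * L) • (((2:ℝ) ^ m)⁻¹ • ∑ σ : Fin m → Bool, θ σ • Y σ) := by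
      have e1 : ∀ i : Fin m, δ i • ((|lam i|) • x (i:ℕ))
          = ((5 * L) * ((2:ℝ) ^ m)⁻¹) • ((∑ σ : Fin m → Bool, θ σ * sg (σ i)) • x (i:ℕ)) := by
        intro i
        rw [smul_smul, smul_smul, hθ2 i, haadef]
        congr 1
        field_simp
      rw [Finset.sum_congr rfl fun i _ => e1 i, ← Finset.smul_sum]
      rw [smul_smul]
      congr 1
      -- ∑ i (∑ σ θσ sg(σ i)) • x i = ∑ σ θσ • Y σ
      have e2 : ∀ i : Fin m, (∑ σ : Fin m → Bool, θ σ * sg (σ i)) • x (i:ℕ)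
          = ∑ σ : Fin m → Bool, (θ σ * sg (σ i)) • x (i:ℕ) := fun i => Finset.sum_smul
      rw [Finset.sum_congr rfl fun i _ => e2 i, Finset.sum_comm]
      refine Finset.sum_congr rfl fun σ _ => ?_
      rw [hYdef, Finset.smul_sum]
      exact Finset.sum_congr rfl fun i _ => by rw [smul_smul]
    rw [hcomp, hvdef]
    apply mySmul_mono_right (by positivity)
    apply mySmul_mono_right (by positivity)
    exact Finset.sum_le_sum fun σ _ => mySmul_le_abs (hθ1 σ) (Y σ)
  -- pass to norms
  have habs1 : abs (∑ i, lam i • |x (i:ℕ)|) ≤ ∑ i, abs ((|lam i|) • x (i:ℕ)) := by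
    refine le_trans (myAbs_sum_le _ _) (Finset.sum_le_sum fun i _ => ?_)
    rw [mySmul_abs (abs_nonneg (lam i)) (x (i:ℕ))]
    calc abs (lam i • |x (i:ℕ)|) ≤ |lam i| • abs (abs (x (i:ℕ))) := myAbs_smul_le _ _
      _ = |lam i| • |x (i:ℕ)| := by rw [abs_abs]
  have hnorm1 : ‖∑ i, lam i • |x (i:ℕ)|‖ ≤ ‖v‖ := by
    apply norm_le_norm_of_abs_le_abs
    rw [abs_of_nonneg hv0]
    exact le_trans habs1 hkey
  have hnormv : ‖v‖ ≤ 5 * C * L := by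
    rw [hvdef, norm_smul, norm_smul]
    have h1 : ‖∑ σ : Fin m → Bool, |Y σ|‖ ≤ 2 ^ m * C := by
      refine le_trans (norm_sum_le _ _) ?_
      have h2 : ∀ σ : Fin m → Bool, ‖|Y σ|‖ ≤ C := by
        intro σ; rw [norm_abs_eq_norm]; exact hYnorm σ
      calc ∑ σ : Fin m → Bool, ‖|Y σ|‖ ≤ ∑ _σ : Fin m → Bool, C :=
            Finset.sum_le_sum fun σ _ => h2 σ
        _ = 2 ^ m * C := by
            rw [Finset.sum_const, Finset.card_univ, Fintype.card_fun]
            simp [nsmul_eq_mul]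
    have h2m : (0:ℝ) < 2 ^ m := by positivity
    calc ‖(5 * L : ℝ)‖ * (‖((2:ℝ) ^ m)⁻¹‖ * ‖∑ σ : Fin m → Bool, |Y σ|‖)
        ≤ (5 * L) * (((2:ℝ) ^ m)⁻¹ * (2 ^ m * C)) := by
          rw [Real.norm_eq_abs, Real.norm_eq_abs, abs_of_nonneg (by positivity : (0:ℝ) ≤ 5 * L),
            abs_of_nonneg (by positivity : (0:ℝ) ≤ ((2:ℝ)^m)⁻¹)]
          refine mul_le_mul_of_nonneg_left ?_ (by positivity)
          exact mul_le_mul_of_nonneg_left h1 (by positivity)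
      _ = 5 * C * L := by field_simp
  exact le_trans hnorm1 hnormv
end Main
end

section
/- Let E be a real Banach space and let x ∈ E. Then sup{ ∑_{k=1}^n |x_k*(x)| : n ∈ ℕ, x_1*,…,x_n* ∈ E*, sup_{‖y‖_E ≤ 1} ∑_{k=1}^n |x_k*(y)| ≤ 1 } = ‖x‖_E. -/
/-- **The canonical embedding `x ↦ δ_x` of `E` into `FBL[E]` is an isometry.** For any `x`
in a real Banach space `E`, the free Banach lattice norm of `δ_x`, given by the explicit
supremum formula, equals `‖x‖`. -/
theorem fbl_delta_isometry
    (E : Type) [NormedAddCommGroup E] [NormedSpace ℝ E] [CompleteSpace E] (x : E) :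
    sSup {s : ℝ | ∃ (n : ℕ) (xs : Fin n → E →L[ℝ] ℝ),
        (∀ y, ‖y‖ ≤ 1 → ∑ k, |xs k y| ≤ 1) ∧ s = ∑ k, |xs k x|} = ‖x‖ := by
  have hub : ∀ s ∈ {s : ℝ | ∃ (n : ℕ) (xs : Fin n → E →L[ℝ] ℝ),
      (∀ y, ‖y‖ ≤ 1 → ∑ k, |xs k y| ≤ 1) ∧ s = ∑ k, |xs k x|}, s ≤ ‖x‖ := by
    rintro s ⟨n, xs, hxs, rfl⟩
    rcases eq_or_ne x 0 with rfl | hx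
    · simp
    · have hxn : (0:ℝ) < ‖x‖ := norm_pos_iff.mpr hx
      have hy : ‖(‖x‖⁻¹ : ℝ) • x‖ ≤ 1 := by
        rw [norm_smul, norm_inv, norm_norm]
        rw [inv_mul_cancel₀ hxn.ne']
      have := hxs _ hy
      have h2 : ∑ k, |xs k ((‖x‖⁻¹ : ℝ) • x)| = ‖x‖⁻¹ * ∑ k, |xs k x| := by
        rw [Finset.mul_sum]
        refine Finset.sum_congr rfl fun k _ => ?_
        rw [map_smul, smul_eq_mul, abs_mul, abs_inv, abs_norm]
      rw [h2] at this
      calc ∑ k, |xs k x| = ‖x‖ * (‖x‖⁻¹ * ∑ k, |xs k x|) := by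
            field_simp
        _ ≤ ‖x‖ * 1 := by
            exact mul_le_mul_of_nonneg_left this hxn.le
        _ = ‖x‖ := mul_one _
  rcases eq_or_ne x 0 with rfl | hx
  · have h0 : (0:ℝ) ∈ {s : ℝ | ∃ (n : ℕ) (xs : Fin n → E →L[ℝ] ℝ),
        (∀ y, ‖y‖ ≤ 1 → ∑ k, |xs k y| ≤ 1) ∧ s = ∑ k, |xs k (0:E)|} := by
      exact ⟨0, fun k => 0, fun y _ => by simp, by simp⟩
    simp only [norm_zero]
    exact le_antisymm (csSup_le ⟨0, h0⟩ (by simpa using hub)) (le_csSup ⟨‖(0:E)‖, hub⟩ h0)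
  · obtain ⟨g, hg1, hgx⟩ := exists_dual_vector ℝ x (norm_ne_zero_iff.mpr hx)
    have hmem : ‖x‖ ∈ {s : ℝ | ∃ (n : ℕ) (xs : Fin n → E →L[ℝ] ℝ),
        (∀ y, ‖y‖ ≤ 1 → ∑ k, |xs k y| ≤ 1) ∧ s = ∑ k, |xs k x|} := by
      refine ⟨1, fun _ => g, fun y hy => ?_, ?_⟩
      · simp only [Finset.sum_const, Finset.card_univ, Fintype.card_fin, one_smul,
          Fin.sum_univ_one]
        calc |g y| ≤ ‖g‖ * ‖y‖ := by
              simpa using g.le_opNorm y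
          _ ≤ 1 := by rw [hg1]; simpa using hy
      · simp [hgx, abs_of_nonneg (norm_nonneg x)]
    exact le_antisymm (csSup_le ⟨‖x‖, hmem⟩ hub) (le_csSup ⟨‖x‖, hub⟩ hmem)
end
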